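/- Let A = (a_{ij})_{i,j≥1} be an arbitrary infinite complex matrix and n ≥ 0. Then the totality of the polynomials P^I_A, as m ranges over all nonnegative integers and I over all m-element subsets of {1,…,m+n} (with the empty index set for m = 0 contributing the constant polynomial 1), is a linear basis of ℂ[x_0,…,x_n] as a ℂ-vector space. -/

import Mathlib

/-- The polynomial `P^I_A` (see the paper): determinant of the `m × m` submatrix of
`A - ∑ x_s I_s` formed by the first `m` rows and the columns indexed by `I` (`0`-based).
For `m = 0` this is the determinant of the empty matrix, i.e. the constant polynomial `1`. -/
noncomputable def PIA (A : ℕ → ℕ → ℂ) (n m : ℕ) (i : Fin m → Fin (m + n)) :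
    MvPolynomial (Fin (n + 1)) ℂ :=
  Matrix.det (Matrix.of fun r c : Fin m =>
    MvPolynomial.C (A (r : ℕ) ((i c : ℕ))) -
      if h : (r : ℕ) ≤ (i c : ℕ) ∧ (i c : ℕ) ≤ (r : ℕ) + n then
        MvPolynomial.X (⟨(i c : ℕ) - (r : ℕ), by omega⟩ : Fin (n + 1))
      else 0)

namespace Stmt4Aux

open MvPolynomial Finset Equiv
open scoped Classical

variable {n : ℕ}

/-! ### Degree and weight of exponent vectors -/

noncomputable def dF (n : ℕ) : (Fin (n+1) →₀ ℕ) →+ ℕ := Finsupp.weight (fun _ => 1)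
noncomputable def wF (n : ℕ) : (Fin (n+1) →₀ ℕ) →+ ℕ :=
  Finsupp.weight (fun s : Fin (n+1) => (s:ℕ) * s)

lemma dF_single (s : Fin (n+1)) (k : ℕ) : dF n (Finsupp.single s k) = k := by
  simp [dF, Finsupp.weight_apply, Finsupp.sum_single_index]

lemma wF_single (s : Fin (n+1)) (k : ℕ) : wF n (Finsupp.single s k) = k * ((s:ℕ) * s) := by
  simp [wF, Finsupp.weight_apply, Finsupp.sum_single_index]

lemma wF_le (μ : Fin (n+1) →₀ ℕ) : wF n μ ≤ n * n * dF n μ := by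
  have h1 : wF n μ = ∑ s ∈ μ.support, μ s * ((s:ℕ)*s) := by
    simp [wF, Finsupp.weight_apply, Finsupp.sum]
  have h2 : dF n μ = ∑ s ∈ μ.support, μ s := by
    simp [dF, Finsupp.weight_apply, Finsupp.sum]
  rw [h1, h2, Finset.mul_sum]
  apply Finset.sum_le_sum
  intro s _
  have : (s : ℕ) ≤ n := by omega
  calc μ s * ((s:ℕ)*s) ≤ μ s * (n*n) := by
        exact Nat.mul_le_mul_left _ (Nat.mul_le_mul this this)
    _ = n*n*μ s := by ring

/-- The key used for the triangularity argument. -/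
noncomputable def key (n : ℕ) (μ : Fin (n+1) →₀ ℕ) : ℕ ×ₗ ℕ :=
  toLex (dF n μ, n*n*dF n μ - wF n μ)

/-! ### Strictly monotone maps `Fin m → Fin (m+n)` -/

lemma strictMono_step {m : ℕ} {f : Fin m → ℕ} (hf : StrictMono f) :
    ∀ (k : ℕ) (a b : Fin m), (b:ℕ) = (a:ℕ) + k → f a + k ≤ f b := by
  intro k
  induction k with
  | zero => intro a b h; have : a = b := Fin.ext (by omega); simp [this]
  | succ k ih =>
    intro a b h
    have hb' : ((a:ℕ) + k) < m := by omega
    have h1 := ih a ⟨(a:ℕ)+k, hb'⟩ rfl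
    have h2 : f ⟨(a:ℕ)+k, hb'⟩ < f b := hf (by simp [Fin.lt_def]; omega)
    omega

lemma lb {m : ℕ} {i : Fin m → Fin (m+n)} (hi : StrictMono i) (c : Fin m) :
    (c : ℕ) ≤ (i c : ℕ) := by
  have h0 : (0:ℕ) < m := by have := c.isLt; omega
  have hf : StrictMono (fun c => (i c : ℕ)) := fun a b hab => hi hab
  have := strictMono_step hf (c : ℕ) ⟨0, h0⟩ c (by simp)
  omega

lemma ub {m : ℕ} {i : Fin m → Fin (m+n)} (hi : StrictMono i) (c : Fin m) :
    (i c : ℕ) ≤ (c : ℕ) + n := by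
  have hf : StrictMono (fun c => (i c : ℕ)) := fun a b hab => hi hab
  have hm : (m - 1) < m := by have := c.isLt; omega
  have := strictMono_step hf ((m-1) - (c:ℕ)) c ⟨m-1, hm⟩ (by simp; omega)
  have h2 : (i ⟨m-1, hm⟩ : ℕ) < m + n := (i _).isLt
  have h3 : (c:ℕ) ≤ m - 1 := by have := c.isLt; omega
  omega

set_option linter.deprecated false in
lemma perm_eq_one {m : ℕ} {σ : Perm (Fin m)} (h : StrictMono (σ : Fin m → Fin m)) : σ = 1 := by
  have : (σ : Fin m → Fin m) = id := by
    apply (StrictMono.range_inj h strictMono_id).1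
    rw [Set.range_id, Set.range_eq_univ]
    exact σ.surjective
  exact Equiv.ext fun c => congrFun this c

/-! ### The exponent vector attached to a permutation -/

def vmin (n x : ℕ) : Fin (n+1) := ⟨min x n, by omega⟩

noncomputable def mu (n m : ℕ) (i : Fin m → Fin (m+n)) (σ : Perm (Fin m)) : Fin (n+1) →₀ ℕ :=
  ∑ c : Fin m, Finsupp.single (vmin n ((i c : ℕ) - (σ c : ℕ))) 1

def conds (n m : ℕ) (i : Fin m → Fin (m+n)) (σ : Perm (Fin m)) : Prop :=
  ∀ c, (σ c : ℕ) ≤ (i c : ℕ) ∧ (i c : ℕ) ≤ (σ c : ℕ) + n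

lemma conds_one {m : ℕ} {i : Fin m → Fin (m+n)} (hi : StrictMono i) : conds n m i 1 :=
  fun c => ⟨lb hi c, ub hi c⟩

lemma dF_mu {m : ℕ} (i : Fin m → Fin (m+n)) (σ : Perm (Fin m)) : dF n (mu n m i σ) = m := by
  rw [mu, map_sum]
  simp [dF_single]

lemma wF_mu {m : ℕ} {i : Fin m → Fin (m+n)} {σ : Perm (Fin m)} (hc : conds n m i σ) :
    wF n (mu n m i σ) = ∑ c, ((i c:ℕ) - (σ c:ℕ)) * ((i c:ℕ) - (σ c:ℕ)) := by
  rw [mu, map_sum]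
  apply Finset.sum_congr rfl
  intro c _
  rw [wF_single, one_mul]
  have h := (hc c).2
  have : ((vmin n ((i c : ℕ) - (σ c : ℕ))) : ℕ) = (i c : ℕ) - (σ c:ℕ) := by
    simp [vmin]; omega
  rw [this]

lemma sum_sq_lt {m : ℕ} {i : Fin m → Fin (m+n)} (hi : StrictMono i) (σ : Perm (Fin m))
    (hc : conds n m i σ) (hσ : σ ≠ 1) :
    ∑ c, ((i c:ℕ) - (c:ℕ)) * ((i c:ℕ) - (c:ℕ))
      < ∑ c, ((i c:ℕ) - (σ c:ℕ)) * ((i c:ℕ) - (σ c:ℕ)) := by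
  have hlb : ∀ c : Fin m, (c:ℕ) ≤ (i c : ℕ) := lb hi
  rw [← Nat.cast_lt (α := ℤ)]
  push_cast
  have e1 : ∀ c : Fin m, (((i c:ℕ) - (c:ℕ) : ℕ) : ℤ) = ((i c : ℕ) : ℤ) - ((c:ℕ) : ℤ) :=
    fun c => by rw [Nat.cast_sub (hlb c)]
  have e2 : ∀ c : Fin m, (((i c:ℕ) - (σ c:ℕ) : ℕ) : ℤ) = ((i c : ℕ) : ℤ) - ((σ c:ℕ) : ℤ) :=
    fun c => by rw [Nat.cast_sub (hc c).1]
  simp only [e1, e2]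
  set F : Fin m → ℤ := fun c => ((i c : ℕ) : ℤ) with hF
  set G : Fin m → ℤ := fun c => ((c : ℕ) : ℤ) with hG
  have expand : ∀ (T : Fin m → ℤ), ∑ c, (F c - T c) * (F c - T c)
      = ∑ c, (F c * F c + T c * T c) - 2 * ∑ c, F c * T c := by
    intro T
    rw [Finset.mul_sum, ← Finset.sum_sub_distrib]
    apply Finset.sum_congr rfl
    intro c _
    ring
  rw [expand G, expand (fun c => ((σ c : ℕ) : ℤ))]
  have hsq : ∑ c, (F c * F c + ((σ c : ℕ):ℤ) * ((σ c:ℕ):ℤ)) = ∑ c, (F c * F c + G c * G c) := by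
    rw [Finset.sum_add_distrib, Finset.sum_add_distrib]
    congr 1
    exact Equiv.sum_comp σ (fun c => G c * G c)
  rw [hsq]
  have hmono : Monovary F G := by
    intro x y hxy
    have : x < y := by simp only [hG, Nat.cast_lt, Fin.val_fin_lt] at hxy; exact_mod_cast hxy
    have : i x ≤ i y := le_of_lt (hi this)
    simp only [hF, Nat.cast_le]
    exact_mod_cast this
  have hrear : ∑ c, F c * G (σ c) < ∑ c, F c * G c := by
    rw [hmono.sum_mul_comp_perm_lt_sum_mul_iff]
    intro hmv
    apply hσ
    apply perm_eq_one
    intro x y hxy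
    rcases lt_trichotomy (σ x) (σ y) with h | h | h
    · exact h
    · exact absurd (σ.injective h) (ne_of_lt hxy)
    · exfalso
      have : G (σ y) < G (σ x) := by
        simp only [hG, Nat.cast_lt]
        exact h
      have hyx := hmv this
      have : (i x : ℕ) < (i y : ℕ) := hi hxy
      simp only [hF] at hyx
      omega
  have : ∑ c, F c * ((σ c : ℕ) : ℤ) = ∑ c, F c * G (σ c) := rfl
  omega

lemma mu_eq_one_iff {m : ℕ} {i : Fin m → Fin (m+n)} (hi : StrictMono i) {σ : Perm (Fin m)}
    (hc : conds n m i σ) (h : mu n m i σ = mu n m i 1) : σ = 1 := by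
  by_contra hσ
  have h1 := wF_mu (n := n) hc
  have h2 := wF_mu (n := n) (conds_one hi)
  have h3 := sum_sq_lt hi σ hc hσ
  rw [h] at h1
  simp only [Equiv.Perm.one_apply] at h2 h3
  omega

/-! ### Coefficients of `PIA` -/

section Entries

variable (A : ℕ → ℕ → ℂ)

noncomputable def entry (n m : ℕ) (i : Fin m → Fin (m+n)) (r c : Fin m) :
    MvPolynomial (Fin (n + 1)) ℂ :=
  MvPolynomial.C (A (r : ℕ) ((i c : ℕ))) -
    if h : (r : ℕ) ≤ (i c : ℕ) ∧ (i c : ℕ) ≤ (r : ℕ) + n then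
      MvPolynomial.X (⟨(i c : ℕ) - (r : ℕ), by omega⟩ : Fin (n + 1))
    else 0

lemma PIA_eq (m : ℕ) (i : Fin m → Fin (m+n)) :
    PIA A n m i = ∑ σ : Perm (Fin m), ((Equiv.Perm.sign σ : ℤ) : MvPolynomial (Fin (n+1)) ℂ)
      * ∏ c, entry A n m i (σ c) c := by
  rw [PIA, Matrix.det_apply']
  rfl

lemma prod_monomial_neg {γ : Type*} (u : Finset γ) (f : γ → (Fin (n+1) →₀ ℕ)) :
    ∏ c ∈ u, monomial (f c) (-1 : ℂ) = monomial (∑ c ∈ u, f c) ((-1 : ℂ)^u.card) := by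
  induction u using Finset.cons_induction with
  | empty => simp [monomial_zero']
  | cons a u ha ih =>
    rw [Finset.prod_cons, Finset.sum_cons, ih, monomial_mul, Finset.card_cons]
    ring_nf

lemma prod_neg_B (m : ℕ) (i : Fin m → Fin (m+n)) (σ : Perm (Fin m)) (u : Finset (Fin m)) :
    (∏ c ∈ u, (-(if h : (σ c : ℕ) ≤ (i c : ℕ) ∧ (i c : ℕ) ≤ (σ c : ℕ) + n then
        MvPolynomial.X (⟨(i c : ℕ) - (σ c : ℕ), by omega⟩ : Fin (n + 1))
      else (0 : MvPolynomial (Fin (n+1)) ℂ))))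
    = if (∀ c ∈ u, (σ c : ℕ) ≤ (i c : ℕ) ∧ (i c : ℕ) ≤ (σ c : ℕ) + n) then
        monomial (∑ c ∈ u, Finsupp.single (vmin n ((i c : ℕ) - (σ c : ℕ))) 1) ((-1 : ℂ)^u.card)
      else 0 := by
  by_cases H : ∀ c ∈ u, (σ c : ℕ) ≤ (i c : ℕ) ∧ (i c : ℕ) ≤ (σ c : ℕ) + n
  · rw [if_pos H]
    have hterm : ∀ c ∈ u, (-(if h : (σ c : ℕ) ≤ (i c : ℕ) ∧ (i c : ℕ) ≤ (σ c : ℕ) + n then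
        MvPolynomial.X (⟨(i c : ℕ) - (σ c : ℕ), by omega⟩ : Fin (n + 1))
      else (0 : MvPolynomial (Fin (n+1)) ℂ)))
        = monomial (Finsupp.single (vmin n ((i c : ℕ) - (σ c : ℕ))) 1) (-1 : ℂ) := by
      intro c hc
      rw [dif_pos (H c hc)]
      have hfe : (⟨(i c : ℕ) - (σ c : ℕ), by have := (H c hc).2; omega⟩ : Fin (n + 1))
          = vmin n ((i c : ℕ) - (σ c : ℕ)) := by
        apply Fin.ext
        have := (H c hc).2
        simp [vmin]
        omega
      rw [hfe]
      simp [X, map_neg]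
    rw [Finset.prod_congr rfl hterm, prod_monomial_neg]
  · rw [if_neg H]
    simp only [not_forall, Classical.not_imp] at H
    obtain ⟨c, hc, hcond⟩ := H
    apply Finset.prod_eq_zero hc
    rw [dif_neg hcond, neg_zero]

end Entries

section Coeffs

variable (A : ℕ → ℕ → ℂ)

lemma coeff_prod_entry (m : ℕ) (i : Fin m → Fin (m+n)) (σ : Perm (Fin m))
    (μ : Fin (n+1) →₀ ℕ) (hμ : dF n μ = m) :
    coeff μ (∏ c, entry A n m i (σ c) c)
      = if conds n m i σ ∧ μ = mu n m i σ then (-1 : ℂ)^m else 0 := by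
  have hentry : ∀ c ∈ (univ : Finset (Fin m)), entry A n m i (σ c) c
      = MvPolynomial.C (A (σ c : ℕ) (i c : ℕ)) +
        (-(if h : (σ c : ℕ) ≤ (i c : ℕ) ∧ (i c : ℕ) ≤ (σ c : ℕ) + n then
            MvPolynomial.X (⟨(i c : ℕ) - (σ c : ℕ), by omega⟩ : Fin (n + 1))
          else (0 : MvPolynomial (Fin (n+1)) ℂ))) := fun c _ => sub_eq_add_neg _ _
  rw [Finset.prod_congr rfl hentry, Finset.prod_add, coeff_sum]
  rw [Finset.sum_eq_single (∅ : Finset (Fin m))]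
  · rw [Finset.prod_empty, one_mul, Finset.sdiff_empty, prod_neg_B]
    by_cases H : conds n m i σ
    · have H' : ∀ c ∈ (univ : Finset (Fin m)), (σ c : ℕ) ≤ (i c : ℕ) ∧ (i c : ℕ) ≤ (σ c : ℕ) + n :=
        fun c _ => H c
      rw [if_pos H', coeff_monomial]
      have hmu : (∑ c ∈ (univ : Finset (Fin m)), Finsupp.single (vmin n ((i c : ℕ) - (σ c : ℕ))) 1)
          = mu n m i σ := rfl
      rw [hmu, Finset.card_univ, Fintype.card_fin]
      by_cases h2 : μ = mu n m i σ
      · rw [if_pos h2.symm, if_pos ⟨H, h2⟩]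
      · rw [if_neg (fun hh => h2 hh.symm), if_neg (fun hh => h2 hh.2)]
    · have H' : ¬ (∀ c ∈ (univ : Finset (Fin m)),
          (σ c : ℕ) ≤ (i c : ℕ) ∧ (i c : ℕ) ≤ (σ c : ℕ) + n) :=
        fun hh => H (fun c => hh c (Finset.mem_univ c))
      rw [if_neg H', coeff_zero, if_neg (fun hh => H hh.1)]
  · intro t _ ht
    rw [← map_prod (MvPolynomial.C : ℂ →+* MvPolynomial (Fin (n+1)) ℂ), prod_neg_B,
      mul_ite, mul_zero]
    by_cases H : ∀ c ∈ univ \ t, (σ c : ℕ) ≤ (i c : ℕ) ∧ (i c : ℕ) ≤ (σ c : ℕ) + n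
    · rw [if_pos H, coeff_C_mul, coeff_monomial]
      have hd : dF n (∑ c ∈ univ \ t, Finsupp.single (vmin n ((i c : ℕ) - (σ c : ℕ))) 1)
          = (univ \ t).card := by
        rw [map_sum]
        simp [dF_single]
      have hcard : (univ \ t).card < m := by
        have h1 : t.card ≤ m := by
          simpa using Finset.card_le_card (Finset.subset_univ t)
        have h2 : 0 < t.card := Finset.card_pos.mpr (Finset.nonempty_of_ne_empty ht)
        rw [Finset.card_sdiff_of_subset (Finset.subset_univ t), Finset.card_univ, Fintype.card_fin]
        omega
      rw [if_neg, mul_zero]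
      intro hh
      rw [hh] at hd
      omega
    · rw [if_neg H, coeff_zero]
  · intro h
    exact absurd (Finset.empty_mem_powerset _) h

lemma coeff_PIA (m : ℕ) (i : Fin m → Fin (m+n)) (μ : Fin (n+1) →₀ ℕ) (hμ : dF n μ = m) :
    coeff μ (PIA A n m i) = ∑ σ : Perm (Fin m),
      ((Equiv.Perm.sign σ : ℤ) : ℂ)
        * (if conds n m i σ ∧ μ = mu n m i σ then (-1 : ℂ)^m else 0) := by
  rw [PIA_eq, coeff_sum]
  apply Finset.sum_congr rfl
  intro σ _
  have hc : (((Equiv.Perm.sign σ : ℤ)) : MvPolynomial (Fin (n+1)) ℂ)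
      = MvPolynomial.C (((Equiv.Perm.sign σ : ℤ)) : ℂ) :=
    (map_intCast (MvPolynomial.C : ℂ →+* MvPolynomial (Fin (n+1)) ℂ) _).symm
  rw [hc, coeff_C_mul, coeff_prod_entry A m i σ μ hμ]

end Coeffs

section Degree

variable (A : ℕ → ℕ → ℂ)

lemma td_entry (m : ℕ) (i : Fin m → Fin (m+n)) (r c : Fin m) :
    (entry A n m i r c).totalDegree ≤ 1 := by
  rw [entry]
  refine (totalDegree_sub _ _).trans ?_
  rw [totalDegree_C]
  simp only [Nat.zero_le, max_le_iff, true_and]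
  split
  · exact le_of_eq (totalDegree_X _)
  · simp

lemma td_PIA (m : ℕ) (i : Fin m → Fin (m+n)) : (PIA A n m i).totalDegree ≤ m := by
  rw [PIA_eq]
  refine (totalDegree_finset_sum _ _).trans ?_
  apply Finset.sup_le
  intro σ _
  refine (totalDegree_mul _ _).trans ?_
  have h1 : ((((Equiv.Perm.sign σ : ℤ)) : MvPolynomial (Fin (n+1)) ℂ)).totalDegree = 0 := by
    rw [(map_intCast (MvPolynomial.C : ℂ →+* MvPolynomial (Fin (n+1)) ℂ) _).symm, totalDegree_C]
  rw [h1, zero_add]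
  refine (totalDegree_finset_prod _ _).trans ?_
  calc ∑ c : Fin m, (entry A n m i (σ c) c).totalDegree ≤ ∑ _c : Fin m, 1 :=
        Finset.sum_le_sum (fun c _ => td_entry A m i (σ c) c)
    _ = m := by simp

lemma dF_le_of_coeff_ne (m : ℕ) (i : Fin m → Fin (m+n)) (μ : Fin (n+1) →₀ ℕ)
    (h : coeff μ (PIA A n m i) ≠ 0) : dF n μ ≤ m := by
  have h1 : μ ∈ (PIA A n m i).support := by rwa [MvPolynomial.mem_support_iff]
  have h2 := MvPolynomial.le_totalDegree h1
  have h3 : dF n μ = μ.sum fun _ e => e := by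
    simp [dF, Finsupp.weight_apply, Finsupp.sum]
  rw [h3]
  exact h2.trans (td_PIA A m i)

end Degree

/-! ### The two triangularity facts -/

section Triangular

variable (A : ℕ → ℕ → ℂ)

lemma coeff_lead {m : ℕ} {i : Fin m → Fin (m+n)} (hi : StrictMono i) :
    coeff (mu n m i 1) (PIA A n m i) = (-1 : ℂ)^m := by
  rw [coeff_PIA A m i _ (dF_mu i 1)]
  rw [Finset.sum_eq_single (1 : Equiv.Perm (Fin m))]
  · rw [if_pos ⟨conds_one hi, rfl⟩]
    simp
  · intro σ _ hσ
    rw [if_neg, mul_zero]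
    rintro ⟨hcσ, heq⟩
    exact hσ (mu_eq_one_iff hi hcσ heq.symm)
  · intro h
    exact absurd (Finset.mem_univ _) h

lemma key_lt_of_coeff_ne {m : ℕ} {i : Fin m → Fin (m+n)} (hi : StrictMono i)
    (μ : Fin (n+1) →₀ ℕ) (hne : μ ≠ mu n m i 1) (hc : coeff μ (PIA A n m i) ≠ 0) :
    key n μ < key n (mu n m i 1) := by
  have hdle := dF_le_of_coeff_ne A m i μ hc
  have hd1 : dF n (mu n m i 1) = m := dF_mu i 1
  rcases lt_or_eq_of_le hdle with hlt | heq
  · rw [key, key, Prod.Lex.lt_iff]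
    left
    simpa [hd1] using hlt
  · -- degree exactly m : use the explicit coefficient formula
    rw [coeff_PIA A m i μ heq] at hc
    obtain ⟨σ, _, hσne⟩ := Finset.exists_ne_zero_of_sum_ne_zero hc
    have hif : conds n m i σ ∧ μ = mu n m i σ := by
      by_contra h
      rw [if_neg h, mul_zero] at hσne
      exact hσne rfl
    obtain ⟨hcσ, hμσ⟩ := hif
    have hσ1 : σ ≠ 1 := by
      rintro rfl
      exact hne hμσ
    have hwlt : wF n (mu n m i 1) < wF n μ := by
      rw [hμσ, wF_mu hcσ, wF_mu (conds_one hi)]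
      simpa using sum_sq_lt hi σ hcσ hσ1
    have hwle : wF n μ ≤ n * n * m := by
      have := wF_le (n := n) μ
      rwa [heq] at this
    have hwle1 : wF n (mu n m i 1) ≤ n * n * m := by
      have := wF_le (n := n) (mu n m i 1)
      rwa [hd1] at this
    rw [key, key, Prod.Lex.lt_iff]
    right
    constructor
    · simp [heq, hd1]
    · simp only [heq, hd1, ofLex_toLex]
      omega

end Triangular

/-! ### The exponent map is a bijection onto all of `Fin (n+1) →₀ ℕ` -/

section Bijection

/-- The normalized difference sequence. -/
noncomputable def dval {m : ℕ} (i : Fin m → Fin (m+n)) (c : Fin m) : Fin (n+1) :=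
  vmin n ((i c : ℕ) - (c : ℕ))

lemma mu_one_eq {m : ℕ} (i : Fin m → Fin (m+n)) :
    mu n m i 1 = ∑ c : Fin m, Finsupp.single (dval i c) 1 := rfl

lemma dval_mono {m : ℕ} {i : Fin m → Fin (m+n)} (hi : StrictMono i) : Monotone (dval i) := by
  intro a b hab
  rcases eq_or_lt_of_le hab with rfl | hlt
  · exact le_rfl
  have hf : StrictMono (fun c => (i c : ℕ)) := fun a b h => hi h
  have h1 := strictMono_step hf ((b:ℕ) - (a:ℕ)) a b (by have : (a:ℕ) < b := hlt; omega)
  have : (a:ℕ) < (b:ℕ) := hlt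
  simp only [dval, vmin, Fin.mk_le_mk]
  omega

lemma toMultiset_mu {m : ℕ} (i : Fin m → Fin (m+n)) :
    Finsupp.toMultiset (mu n m i 1) = ↑(List.ofFn (fun c => dval i c)) := by
  rw [mu_one_eq, map_sum]
  have h1 : ∀ c : Fin m, Finsupp.toMultiset (Finsupp.single (dval i c) 1)
      = ({dval i c} : Multiset (Fin (n+1))) := by
    intro c
    rw [Finsupp.toMultiset_single, one_nsmul]
  rw [Finset.sum_congr rfl (fun c _ => h1 c)]
  rw [Finset.sum, Fin.univ_def]
  show (Multiset.map (fun c => ({dval i c} : Multiset (Fin (n+1)))) ↑(List.finRange m)).sum = _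
  rw [show (fun c => ({dval i c} : Multiset (Fin (n+1))))
      = (fun a => ({a} : Multiset (Fin (n+1)))) ∘ (fun c => dval i c) from rfl]
  rw [← Multiset.map_map, Multiset.sum_map_singleton]
  rw [List.ofFn_eq_map]
  simp

lemma toMultiset_injective :
    Function.Injective (Finsupp.toMultiset : (Fin (n+1) →₀ ℕ) → Multiset (Fin (n+1))) := by
  intro f g h
  ext a
  rw [← Finsupp.count_toMultiset f a, ← Finsupp.count_toMultiset g a, h]

/-- The exponent map. -/
noncomputable def eMap (n : ℕ) (p : Σ m : ℕ, {i : Fin m → Fin (m + n) // StrictMono i}) :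
    Fin (n+1) →₀ ℕ := mu n p.1 p.2.1 1

lemma eMap_injective : Function.Injective (eMap n) := by
  rintro ⟨m, i, hi⟩ ⟨m', i', hi'⟩ h
  have hm : m = m' := by
    have := congrArg (dF n) h
    simpa only [eMap, dF_mu] using this
  subst hm
  have hlist : List.ofFn (fun c => dval i c) = List.ofFn (fun c => dval i' c) := by
    haveI : IsAntisymm (Fin (n+1)) (· ≤ ·) := ⟨fun _ _ => le_antisymm⟩
    refine (fun h1 h2 h3 => List.Perm.eq_of_sortedLE h2 h3 h1) ?_ ?_ ?_
    · rw [← Multiset.coe_eq_coe, ← toMultiset_mu, ← toMultiset_mu]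
      exact congrArg _ h
    · exact (List.sortedLE_ofFn_iff).2 (dval_mono hi)
    · exact (List.sortedLE_ofFn_iff).2 (dval_mono hi')
  have hd : (fun c => dval i c) = (fun c => dval i' c) := List.ofFn_injective hlist
  have hii : i = i' := by
    funext c
    have hc := congrFun hd c
    have h1 : min ((i c : ℕ) - c) n = min ((i' c : ℕ) - c) n := congrArg Fin.val hc
    have hub := ub hi c
    have hub' := ub hi' c
    have hlb := lb hi c
    have hlb' := lb hi' c
    apply Fin.ext
    omega
  cases hii
  rfl

lemma eMap_surjective : Function.Surjective (eMap n) := by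
  intro μ
  set L := Multiset.sort (Finsupp.toMultiset μ) (· ≤ ·) with hLdef
  set m := L.length with hmdef
  have hsorted : L.Pairwise (· ≤ ·) := Multiset.pairwise_sort _ _
  set d : Fin m → Fin (n+1) := fun c => L.get c with hddef
  have hdmono : Monotone d := fun a b hab => hsorted.rel_get_of_le hab
  have hibnd : ∀ c : Fin m, (c:ℕ) + (d c : ℕ) < m + n := by
    intro c
    have h1 := c.isLt
    have h2 := (d c).isLt
    omega
  set i : Fin m → Fin (m + n) := fun c => ⟨(c:ℕ) + (d c : ℕ), hibnd c⟩ with hidef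
  have hi : StrictMono i := by
    intro a b hab
    have h1 : (a:ℕ) < (b:ℕ) := hab
    have h2 : (d a : ℕ) ≤ (d b : ℕ) := hdmono (le_of_lt hab)
    simp only [hidef, Fin.mk_lt_mk]
    omega
  refine ⟨⟨m, ⟨i, hi⟩⟩, ?_⟩
  apply toMultiset_injective
  rw [eMap]
  show Finsupp.toMultiset (mu n m i 1) = _
  rw [toMultiset_mu]
  have hdv : (fun c => dval i c) = d := by
    funext c
    apply Fin.ext
    have h2 := (d c).isLt
    simp only [dval, vmin, hidef]
    omega
  rw [hdv, hddef]
  rw [List.ofFn_get]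
  exact Multiset.sort_eq _ _

end Bijection

end Stmt4Aux

theorem stmt4 (A : ℕ → ℕ → ℂ) (n : ℕ) :
    LinearIndependent ℂ
      (fun p : Σ m : ℕ, {i : Fin m → Fin (m + n) // StrictMono i} => PIA A n p.1 p.2.1) ∧
    Submodule.span ℂ
      (Set.range
        (fun p : Σ m : ℕ, {i : Fin m → Fin (m + n) // StrictMono i} => PIA A n p.1 p.2.1)) =
      ⊤ := by
  classical
  open Stmt4Aux MvPolynomial in
  constructor
  · -- Linear independence
    rw [linearIndependent_iff]
    intro l hl
    by_contra hlne
    have hsupp : l.support.Nonempty := Finsupp.support_nonempty_iff.mpr hlne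
    obtain ⟨p₀, hp₀mem, hp₀max⟩ :=
      Finset.exists_max_image l.support (fun p => key n (eMap n p)) hsupp
    have hcoeff : MvPolynomial.coeff (eMap n p₀)
        (Finsupp.linearCombination ℂ
          (fun p : Σ m : ℕ, {i : Fin m → Fin (m + n) // StrictMono i} => PIA A n p.1 p.2.1) l)
        = 0 := by
      rw [hl, MvPolynomial.coeff_zero]
    rw [Finsupp.linearCombination_apply, Finsupp.sum, MvPolynomial.coeff_sum] at hcoeff
    rw [Finset.sum_eq_single p₀] at hcoeff
    · rw [MvPolynomial.coeff_smul] at hcoeff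
      have hlead : MvPolynomial.coeff (eMap n p₀) (PIA A n p₀.1 p₀.2.1) = (-1 : ℂ)^p₀.1 :=
        coeff_lead A p₀.2.2
      rw [hlead] at hcoeff
      have : l p₀ = 0 := by
        have hne : ((-1 : ℂ)^p₀.1) ≠ 0 := pow_ne_zero _ (neg_ne_zero.mpr one_ne_zero)
        simpa [smul_eq_mul, mul_eq_zero, hne] using hcoeff
      exact (Finsupp.mem_support_iff.mp hp₀mem) this
    · intro p hpmem hpne
      rw [MvPolynomial.coeff_smul]
      rcases eq_or_ne (MvPolynomial.coeff (eMap n p₀) (PIA A n p.1 p.2.1)) 0 with h0 | h0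
      · rw [h0, smul_zero]
      exfalso
      rcases eq_or_ne (eMap n p₀) (eMap n p) with he | he
      · exact hpne (eMap_injective he.symm)
      · have hlt : key n (eMap n p₀) < key n (eMap n p) :=
          key_lt_of_coeff_ne A p.2.2 (eMap n p₀) he h0
        exact absurd (hp₀max p hpmem) (not_le_of_gt hlt)
    · intro h
      exact absurd hp₀mem h
  · -- Spanning
    set S := Submodule.span ℂ
      (Set.range
        (fun p : Σ m : ℕ, {i : Fin m → Fin (m + n) // StrictMono i} => PIA A n p.1 p.2.1))
      with hSdef
    have wf : WellFounded (fun a b : (Fin (n+1) →₀ ℕ) => key n a < key n b) :=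
      InvImage.wf _ (wellFounded_lt)
    have hmono : ∀ μ : Fin (n+1) →₀ ℕ, (MvPolynomial.monomial μ) (1 : ℂ) ∈ S := by
      intro μ
      induction μ using WellFounded.induction wf with
      | _ μ ih =>
      obtain ⟨p, hp⟩ := eMap_surjective (n := n) μ
      obtain ⟨m, i, hi⟩ := p
      have hp' : mu n m i 1 = μ := hp
      have hPmem : PIA A n m i ∈ S := Submodule.subset_span ⟨⟨m, i, hi⟩, rfl⟩
      have hlead : MvPolynomial.coeff μ (PIA A n m i) = (-1 : ℂ)^m := by
        rw [← hp']
        exact coeff_lead A hi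
      have hne0 : ((-1 : ℂ)^m) ≠ 0 := pow_ne_zero _ (neg_ne_zero.mpr one_ne_zero)
      have hμsupp : μ ∈ (PIA A n m i).support := by
        rw [MvPolynomial.mem_support_iff, hlead]
        exact hne0
      have hsum : (MvPolynomial.monomial μ) ((-1 : ℂ)^m)
          = PIA A n m i
            - ∑ ν ∈ (PIA A n m i).support.erase μ,
                (MvPolynomial.monomial ν) (MvPolynomial.coeff ν (PIA A n m i)) := by
        rw [eq_sub_iff_add_eq, ← hlead]
        rw [Finset.add_sum_erase _
          (fun ν => (MvPolynomial.monomial ν) (MvPolynomial.coeff ν (PIA A n m i))) hμsupp]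
        exact ((PIA A n m i).as_sum).symm
      have hrest : (∑ ν ∈ (PIA A n m i).support.erase μ,
          (MvPolynomial.monomial ν) (MvPolynomial.coeff ν (PIA A n m i))) ∈ S := by
        apply Submodule.sum_mem
        intro ν hν
        have hνne : ν ≠ μ := Finset.ne_of_mem_erase hν
        have hνsupp : MvPolynomial.coeff ν (PIA A n m i) ≠ 0 :=
          MvPolynomial.mem_support_iff.mp (Finset.mem_of_mem_erase hν)
        have hνlt : key n ν < key n μ := by
          rw [← hp']
          exact key_lt_of_coeff_ne A hi ν (by rw [hp']; exact hνne) hνsupp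
        have : (MvPolynomial.monomial ν) (MvPolynomial.coeff ν (PIA A n m i))
            = (MvPolynomial.coeff ν (PIA A n m i)) • (MvPolynomial.monomial ν) (1 : ℂ) := by
          rw [MvPolynomial.smul_monomial, smul_eq_mul, mul_one]
        rw [this]
        exact Submodule.smul_mem _ _ (ih ν hνlt)
      have hmem : (MvPolynomial.monomial μ) ((-1 : ℂ)^m) ∈ S := by
        rw [hsum]
        exact Submodule.sub_mem _ hPmem hrest
      have : (MvPolynomial.monomial μ) (1 : ℂ)
          = ((-1 : ℂ)^m)⁻¹ • (MvPolynomial.monomial μ) ((-1 : ℂ)^m) := by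
        rw [MvPolynomial.smul_monomial, smul_eq_mul, inv_mul_cancel₀ hne0]
      rw [this]
      exact Submodule.smul_mem _ _ hmem
    rw [eq_top_iff]
    intro q _
    rw [(q : MvPolynomial (Fin (n+1)) ℂ).as_sum]
    apply Submodule.sum_mem
    intro ν _
    have : (MvPolynomial.monomial ν) (MvPolynomial.coeff ν q)
        = (MvPolynomial.coeff ν q) • (MvPolynomial.monomial ν) (1 : ℂ) := by
      rw [MvPolynomial.smul_monomial, smul_eq_mul, mul_one]
    rw [this]
    exact Submodule.smul_mem _ _ (hmono ν)
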